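/- For every b ≥ 0, the scale function W_q satisfies the integro-differential equation c·W_q'(b) + λ∫₀^b W_q(y)·(μ/α)·e^{−(μ/α)(b−y)} dy − (λ + q)·W_q(b) = 0. -/

import Mathlib

set_option maxHeartbeats 800000 in
theorem stmt5 (c α lam q μ : ℝ)
    (hc : 0 < c) (hα0 : 0 < α) (hα1 : α ≤ 1)
    (hlam : 0 < lam) (hq : 0 < q) (hμ : 0 < μ)
    (Δ Φ ρ : ℝ)
    (hΔ : Δ = (c*μ - α*lam - α*q)^2 + 4*α*c*μ*q)
    (hΦ : Φ = (-(c*μ - α*lam - α*q) + Real.sqrt Δ) / (2*α*c))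
    (hρ : ρ = (-(c*μ - α*lam - α*q) - Real.sqrt Δ) / (2*α*c))
    (W : ℝ → ℝ)
    (hW : ∀ x, W x = ((α*Φ + μ)*Real.exp (Φ*x) - (α*ρ + μ)*Real.exp (ρ*x))/(α*c*(Φ - ρ))) :
    ∀ b : ℝ, 0 ≤ b →
      c * deriv W b
        + lam * (∫ y in (0:ℝ)..b, W y * (μ/α) * Real.exp (-(μ/α)*(b - y)))
        - (lam + q) * W b = 0 := by
  intro b hb
  have hα : α ≠ 0 := ne_of_gt hα0
  have hΔpos : 0 < Δ := by rw [hΔ]; positivity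
  have hs : Real.sqrt Δ ^ 2 = Δ := Real.sq_sqrt hΔpos.le
  have hspos : 0 < Real.sqrt Δ := Real.sqrt_pos.mpr hΔpos
  have hαc : α * c ≠ 0 := by positivity
  have hrΦ : α*c*Φ^2 + (c*μ - α*lam - α*q)*Φ - μ*q = 0 := by
    rw [hΦ]; field_simp; nlinarith [hs, hΔ]
  have hrρ : α*c*ρ^2 + (c*μ - α*lam - α*q)*ρ - μ*q = 0 := by
    rw [hρ]; field_simp; nlinarith [hs, hΔ]
  have hΦρ : Φ - ρ = Real.sqrt Δ / (α*c) := by rw [hΦ, hρ]; field_simp; ring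
  have hΦρ0 : Φ - ρ ≠ 0 := by rw [hΦρ]; positivity
  have hD : α*c*(Φ - ρ) ≠ 0 := mul_ne_zero hαc hΦρ0
  have hWfun : W = fun x =>
      ((α*Φ + μ)*Real.exp (Φ*x) - (α*ρ + μ)*Real.exp (ρ*x))/(α*c*(Φ - ρ)) := by
    funext x; exact hW x
  -- derivative of W at b
  have hder : HasDerivAt W
      (((α*Φ + μ)*Φ*Real.exp (Φ*b) - (α*ρ + μ)*ρ*Real.exp (ρ*b))/(α*c*(Φ - ρ))) b := by
    rw [hWfun]
    have h1 : HasDerivAt (fun x => Real.exp (Φ*x)) (Real.exp (Φ*b) * Φ) b := by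
      simpa using ((hasDerivAt_id b).const_mul Φ).exp
    have h2 : HasDerivAt (fun x => Real.exp (ρ*x)) (Real.exp (ρ*b) * ρ) b := by
      simpa using ((hasDerivAt_id b).const_mul ρ).exp
    have h := ((h1.const_mul (α*Φ + μ)).sub (h2.const_mul (α*ρ + μ))).div_const (α*c*(Φ - ρ))
    exact h.congr_deriv (by ring)
  -- value of the convolution integral
  have hint : (∫ y in (0:ℝ)..b, W y * (μ/α) * Real.exp (-(μ/α)*(b - y)))
      = (μ/(α*c*(Φ - ρ))) * (Real.exp (Φ*b) - Real.exp (ρ*b)) := by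
    have key : ∀ y : ℝ, W y * (μ/α) * Real.exp (-(μ/α)*(b - y))
        = (μ * Real.exp (-(μ/α)*b) / (α*c*(Φ - ρ)))
          * (Real.exp ((Φ+μ/α)*y) * (Φ+μ/α) - Real.exp ((ρ+μ/α)*y) * (ρ+μ/α)) := by
      intro y
      rw [hW y,
        show -(μ/α)*(b-y) = (-(μ/α)*b) + (μ/α)*y by ring, Real.exp_add,
        show (Φ+μ/α)*y = Φ*y + (μ/α)*y by ring, Real.exp_add,
        show (ρ+μ/α)*y = ρ*y + (μ/α)*y by ring, Real.exp_add]
      field_simp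
    have hF : ∀ y ∈ Set.uIcc (0:ℝ) b,
        HasDerivAt (fun y => (μ * Real.exp (-(μ/α)*b) / (α*c*(Φ - ρ)))
            * (Real.exp ((Φ+μ/α)*y) - Real.exp ((ρ+μ/α)*y)))
          (W y * (μ/α) * Real.exp (-(μ/α)*(b - y))) y := by
      intro y _
      have h1 : HasDerivAt (fun y => Real.exp ((Φ+μ/α)*y)) (Real.exp ((Φ+μ/α)*y) * (Φ+μ/α)) y := by
        simpa using ((hasDerivAt_id y).const_mul (Φ+μ/α)).exp
      have h2 : HasDerivAt (fun y => Real.exp ((ρ+μ/α)*y)) (Real.exp ((ρ+μ/α)*y) * (ρ+μ/α)) y := by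
        simpa using ((hasDerivAt_id y).const_mul (ρ+μ/α)).exp
      have h := (h1.sub h2).const_mul (μ * Real.exp (-(μ/α)*b) / (α*c*(Φ - ρ)))
      rw [key y]
      exact h
    have hcont : Continuous (fun y => W y * (μ/α) * Real.exp (-(μ/α)*(b - y))) := by
      rw [hWfun]; fun_prop
    rw [intervalIntegral.integral_eq_sub_of_hasDerivAt hF (hcont.intervalIntegrable 0 b)]
    rw [show (Φ+μ/α)*b = Φ*b + (μ/α)*b by ring, Real.exp_add,
      show (ρ+μ/α)*b = ρ*b + (μ/α)*b by ring, Real.exp_add,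
      show -(μ/α)*b = -((μ/α)*b) by ring, Real.exp_neg]
    have hE : Real.exp ((μ/α)*b) ≠ 0 := Real.exp_ne_zero _
    simp only [mul_zero, Real.exp_zero, sub_self, mul_zero, sub_zero]
    field_simp
  rw [hder.deriv, hint, hW b]
  linear_combination (Real.exp (Φ*b)/(α*c*(Φ-ρ))) * hrΦ
    - (Real.exp (ρ*b)/(α*c*(Φ-ρ))) * hrρ
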